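/- Let p be an odd prime and R = Λ(x_1,...,x_k) ⊗ F_p[y_1,...,y_k] with k ≥ n+1. Let Q_i be the odd graded derivation with Q_i(x_j) = y_j^{p^i} and Q_i(y_j) = 0. Then for m with n+1 ≤ m ≤ k, the element Q_n Q_{n-1} ⋯ Q_0 (x_1 ⋯ x_m) is nonzero in R. -/

import Mathlib

open scoped TensorProduct

/-- The composite `Q n ∘ Q (n-1) ∘ ⋯ ∘ Q 0`. -/
def compQ {A : Type*} (Q : ℕ → A → A) : ℕ → A → A
  | 0 => Q 0
  | n + 1 => Q (n + 1) ∘ compQ Q n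

/-- The free graded-commutative `F_p`-algebra `Λ(x₁,…,x_k) ⊗ F_p[y₁,…,y_k]`. -/
abbrev FreeGC (p k : ℕ) [Fact p.Prime] : Type :=
  ExteriorAlgebra (ZMod p) (Fin k → ZMod p) ⊗[ZMod p] MvPolynomial (Fin k) (ZMod p)

/-- The odd degree-one generators `xᵢ`. -/
noncomputable def xGen (p k : ℕ) [Fact p.Prime] (i : Fin k) : FreeGC p k :=
  (ExteriorAlgebra.ι (ZMod p) (Pi.single i 1)) ⊗ₜ 1

/-- The even degree-two generators `yᵢ`. -/
noncomputable def yGen (p k : ℕ) [Fact p.Prime] (i : Fin k) : FreeGC p k :=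
  1 ⊗ₜ MvPolynomial.X i

namespace Stmt10
variable (p k m : ℕ) [Fact p.Prime]

noncomputable def eG (j : Fin k) : ExteriorAlgebra (ZMod p) (Fin k → ZMod p) :=
  ExteriorAlgebra.ι (ZMod p) (Pi.single j 1)

noncomputable def eP (l : List (Fin k)) : ExteriorAlgebra (ZMod p) (Fin k → ZMod p) :=
  (l.map (eG p k)).prod

noncomputable def xP (l : List (Fin k)) : FreeGC p k := (l.map (xGen p k)).prod

lemma xP_eq (l : List (Fin k)) : xP p k l = eP p k l ⊗ₜ 1 := by
  have : xP p k l = Algebra.TensorProduct.includeLeft (R := ZMod p) (S := ZMod p)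
      (B := MvPolynomial (Fin k) (ZMod p)) (eP p k l) := by
    rw [eP, map_list_prod, xP, List.map_map]
    rfl
  simpa using this

lemma eP_cons (j : Fin k) (l : List (Fin k)) : eP p k (j :: l) = eG p k j * eP p k l := by
  simp [eP]

lemma contract_eP (d : Module.Dual (ZMod p) (Fin k → ZMod p)) (l : List (Fin k))
    (h : ∀ j ∈ l, d (Pi.single j 1) = 0) :
    CliffordAlgebra.contractLeft d (eP p k l) = 0 := by
  induction l with
  | nil =>
    show CliffordAlgebra.contractLeft d (1 : ExteriorAlgebra (ZMod p) (Fin k → ZMod p)) = 0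
    have : (1 : ExteriorAlgebra (ZMod p) (Fin k → ZMod p)) = algebraMap (ZMod p) _ 1 := by simp
    rw [this, CliffordAlgebra.contractLeft_algebraMap]
  | cons j l ih =>
    rw [eP_cons]
    show CliffordAlgebra.contractLeft d
      (CliffordAlgebra.ι (0 : QuadraticForm (ZMod p) (Fin k → ZMod p)) (Pi.single j 1) * eP p k l) = 0
    rw [CliffordAlgebra.contractLeft_ι_mul, h j (by simp), ih (fun j' hj' => h j' (by simp [hj']))]
    simp

lemma eP_ne_zero (l : List (Fin k)) (hl : l.Nodup) : eP p k l ≠ 0 := by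
  induction l with
  | nil =>
    show (1 : ExteriorAlgebra (ZMod p) (Fin k → ZMod p)) ≠ 0
    exact one_ne_zero
  | cons j l ih =>
    intro h0
    have hd : ∀ j' ∈ l, (LinearMap.proj j : (Fin k → ZMod p) →ₗ[ZMod p] ZMod p)
        (Pi.single j' 1) = 0 := by
      intro j' hj'
      have : j' ≠ j := fun h => (List.nodup_cons.1 hl).1 (h ▸ hj')
      simp [Pi.single_apply, this]
    have := contract_eP p k (LinearMap.proj j) l hd
    have h2 : CliffordAlgebra.contractLeft (Q := (0 : QuadraticForm (ZMod p) (Fin k → ZMod p)))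
        (LinearMap.proj j) (eP p k (j :: l)) = eP p k l := by
      rw [eP_cons]
      show CliffordAlgebra.contractLeft _
        (CliffordAlgebra.ι (0 : QuadraticForm (ZMod p) (Fin k → ZMod p)) (Pi.single j 1) * eP p k l) = _
      rw [CliffordAlgebra.contractLeft_ι_mul, this, mul_zero, sub_zero]
      simp
    rw [h0, map_zero] at h2
    exact ih (List.nodup_cons.1 hl).2 h2.symm

lemma exists_phi (l : List (Fin k)) (hl : l.Nodup) :
    ∃ φ : Module.Dual (ZMod p) (ExteriorAlgebra (ZMod p) (Fin k → ZMod p)),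
      φ (eP p k l) = 1 := by
  have h := eP_ne_zero p k l hl
  have : ¬ ∀ φ : Module.Dual (ZMod p) (ExteriorAlgebra (ZMod p) (Fin k → ZMod p)),
      φ (eP p k l) = 0 := by
    rw [Module.forall_dual_apply_eq_zero_iff]; exact h
  push_neg at this
  obtain ⟨φ, hφ⟩ := this
  exact ⟨(φ (eP p k l))⁻¹ • φ, by simp [inv_mul_cancel₀ hφ]⟩


set_option linter.unusedSectionVars false

def lInit (hmk : m ≤ k) : List (Fin k) := List.ofFn (fun t : Fin m => Fin.castLE hmk t)

lemma lInit_nodup (hmk : m ≤ k) : (lInit k m hmk).Nodup :=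
  List.nodup_ofFn.2 (Fin.castLE_injective hmk)

def lF (hmk : m ≤ k) {s : ℕ} (f : Fin s → Fin k) : List (Fin k) :=
  (lInit k m hmk).filter (fun j => decide (∀ i, f i ≠ j))

lemma lF_nodup (hmk : m ≤ k) {s : ℕ} (f : Fin s → Fin k) : (lF k m hmk f).Nodup :=
  (lInit_nodup k m hmk).filter _

lemma mem_lF (hmk : m ≤ k) {s : ℕ} (f : Fin s → Fin k) (j : Fin k) :
    j ∈ lF k m hmk f ↔ ((j : ℕ) < m ∧ ∀ i, f i ≠ j) := by
  simp only [lF, lInit, List.mem_filter, List.mem_ofFn, decide_eq_true_iff]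
  constructor
  · rintro ⟨⟨t, ht⟩, h2⟩
    exact ⟨ht ▸ t.isLt, h2⟩
  · rintro ⟨h1, h2⟩
    exact ⟨⟨⟨j, h1⟩, Fin.ext rfl⟩, h2⟩

def f0 (s : ℕ) (hsk : s ≤ k) : Fin s → Fin k := Fin.castLE hsk

lemma f0_inj (s : ℕ) (hsk : s ≤ k) : Function.Injective (f0 k s hsk) :=
  Fin.castLE_injective hsk

lemma lF_eraseIdx (hmk : m ≤ k) {s : ℕ} (f : Fin s → Fin k) (t : Fin (lF k m hmk f).length) :
    (lF k m hmk f).eraseIdx t = lF k m hmk (Fin.snoc f ((lF k m hmk f).get t)) := by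
  rw [← List.Nodup.erase_get (lF_nodup k m hmk f) t]
  set j := (lF k m hmk f).get t with hj
  rw [List.Nodup.erase_eq_filter (lF_nodup k m hmk f), lF, List.filter_filter, lF]
  apply List.filter_congr
  intro a _
  have hbne : (a != j) = decide (j ≠ a) := by
    rcases eq_or_ne j a with h | h
    · simp [h]
    · simp only [ne_eq, h, not_false_eq_true, decide_true]
      exact bne_iff_ne.2 (Ne.symm h)
  rw [hbne, ← Bool.decide_and, decide_eq_decide]
  constructor
  · rintro ⟨h1, h2⟩ i
    refine Fin.lastCases ?_ ?_ i
    · simpa using h1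
    · intro i'; simpa using h2 i'
  · intro h
    refine ⟨by simpa using h (Fin.last s), fun i' => by simpa using h i'.castSucc⟩



noncomputable def dF {s : ℕ} (f : Fin s → Fin k) : Fin k →₀ ℕ :=
  ∑ i : Fin s, Finsupp.single (f i) (p ^ (i : ℕ))

lemma dF_apply_of_inj {s : ℕ} (f : Fin s → Fin k) (hf : Function.Injective f) (i : Fin s) :
    dF p k f (f i) = p ^ (i : ℕ) := by
  rw [dF, Finsupp.finset_sum_apply]
  rw [Finset.sum_eq_single i]
  · simp
  · intro b _ hb
    rw [Finsupp.single_apply, if_neg (fun h => hb (hf h))]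
  · simp

lemma dF_apply_not_mem {s : ℕ} (f : Fin s → Fin k) (j : Fin k) (hj : ∀ i, f i ≠ j) :
    dF p k f j = 0 := by
  rw [dF, Finsupp.finset_sum_apply]
  apply Finset.sum_eq_zero
  intro i _
  rw [Finsupp.single_apply, if_neg (hj i)]

lemma dF_inj {s : ℕ} (hsk : s ≤ k) (f : Fin s → Fin k) (hf : Function.Injective f)
    (h : dF p k f = dF p k (Fin.castLE hsk)) : f = Fin.castLE hsk := by
  have hp2 : 2 ≤ p := (Fact.out : p.Prime).two_le
  funext i
  have h1 : dF p k (Fin.castLE hsk) (f i) = p ^ (i : ℕ) := by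
    rw [← h]; exact dF_apply_of_inj p k f hf i
  by_cases hc : ∃ i' : Fin s, Fin.castLE hsk i' = f i
  · obtain ⟨i', hi'⟩ := hc
    rw [← hi', dF_apply_of_inj p k _ (Fin.castLE_injective hsk)] at h1
    have : (i' : ℕ) = (i : ℕ) := Nat.pow_right_injective hp2 h1
    rw [← hi']
    exact Fin.ext (by simpa using this.symm) ▸ rfl
  · push_neg at hc
    rw [dF_apply_not_mem p k _ _ hc] at h1
    exact absurd h1.symm (pow_ne_zero _ (Nat.Prime.ne_zero Fact.out))

lemma dF_snoc {s : ℕ} (f : Fin s → Fin k) (j : Fin k) :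
    dF p k (Fin.snoc f j) = dF p k f + Finsupp.single j (p ^ s) := by
  rw [dF, Fin.sum_univ_castSucc]
  simp [dF]



noncomputable def bb (hmk : m ≤ k) {s : ℕ} (f : Fin s → Fin k) : FreeGC p k :=
  eP p k (lF k m hmk f) ⊗ₜ MvPolynomial.monomial (dF p k f) 1

noncomputable def LL (φ : Module.Dual (ZMod p) (ExteriorAlgebra (ZMod p) (Fin k → ZMod p)))
    (μ : Fin k →₀ ℕ) : FreeGC p k →ₗ[ZMod p] ZMod p :=
  (TensorProduct.lid (ZMod p) (ZMod p)).toLinearMap ∘ₗ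
    TensorProduct.map φ (MvPolynomial.lcoeff (ZMod p) μ)

lemma LL_tmul (φ : Module.Dual (ZMod p) (ExteriorAlgebra (ZMod p) (Fin k → ZMod p)))
    (μ : Fin k →₀ ℕ) (a : ExteriorAlgebra (ZMod p) (Fin k → ZMod p))
    (P : MvPolynomial (Fin k) (ZMod p)) :
    LL p k φ μ (a ⊗ₜ P) = φ a * MvPolynomial.coeff μ P := by
  simp [LL, MvPolynomial.lcoeff, smul_eq_mul]

lemma LL_bb (hmk : m ≤ k) {s : ℕ} (hsk : s ≤ k)
    (φ : Module.Dual (ZMod p) (ExteriorAlgebra (ZMod p) (Fin k → ZMod p)))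
    (hφ : φ (eP p k (lF k m hmk (Fin.castLE hsk))) = 1)
    (f : Fin s → Fin k) (hf : Function.Injective f) :
    LL p k φ (dF p k (Fin.castLE hsk)) (bb p k m hmk f) =
      if f = Fin.castLE hsk then 1 else 0 := by
  rw [bb, LL_tmul, MvPolynomial.coeff_monomial]
  by_cases h : f = Fin.castLE hsk
  · rw [if_pos h, if_pos (by rw [h]), h, hφ, mul_one]
  · rw [if_neg h, if_neg (fun hd => h (dF_inj p k hsk f hf hd)), mul_zero]


lemma right_comm (q : MvPolynomial (Fin k) (ZMod p)) (z : FreeGC p k) :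
    (1 ⊗ₜ[ZMod p] q) * z = z * (1 ⊗ₜ q) := by
  induction z using TensorProduct.induction_on with
  | zero => simp
  | tmul a b => simp [Algebra.TensorProduct.tmul_mul_tmul, mul_comm]
  | add x y hx hy => rw [mul_add, add_mul, hx, hy]

lemma ypow (j : Fin k) (e : ℕ) : yGen p k j ^ e = 1 ⊗ₜ[ZMod p] (MvPolynomial.X j ^ e) := by
  rw [yGen, Algebra.TensorProduct.tmul_pow, one_pow]

section QLayer
variable (σ : FreeGC p k →+* FreeGC p k) (Q : ℕ → FreeGC p k →ₗ[ZMod p] FreeGC p k)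

lemma Q_one (hL : ∀ (i : ℕ) (a b : FreeGC p k), Q i (a * b) = Q i a * b + σ a * Q i b)
    (i : ℕ) : Q i 1 = 0 := by
  have h := hL i 1 1
  rw [mul_one, mul_one, RingHom.map_one, one_mul] at h
  exact (left_eq_add.mp h)

lemma Q_right (hL : ∀ (i : ℕ) (a b : FreeGC p k), Q i (a * b) = Q i a * b + σ a * Q i b)
    (hQy : ∀ (i : ℕ) (j : Fin k), Q i (yGen p k j) = 0)
    (i : ℕ) (P : MvPolynomial (Fin k) (ZMod p)) : Q i (1 ⊗ₜ P) = 0 := by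
  induction P using MvPolynomial.induction_on with
  | C a =>
    have : (1 : ExteriorAlgebra (ZMod p) (Fin k → ZMod p)) ⊗ₜ[ZMod p] (MvPolynomial.C a) =
        a • (1 : FreeGC p k) := by
      rw [show (MvPolynomial.C a : MvPolynomial (Fin k) (ZMod p)) = a • 1 from
          ((MvPolynomial.smul_eq_C_mul 1 a).trans (mul_one _)).symm,
        TensorProduct.tmul_smul, Algebra.TensorProduct.one_def]
    rw [this, map_smul, Q_one p k σ Q hL, smul_zero]
  | add P1 P2 h1 h2 =>
    rw [TensorProduct.tmul_add, map_add, h1, h2, add_zero]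
  | mul_X P j h =>
    have : (1 : ExteriorAlgebra (ZMod p) (Fin k → ZMod p)) ⊗ₜ[ZMod p] (P * MvPolynomial.X j) =
        (1 ⊗ₜ P) * yGen p k j := by
      rw [yGen, Algebra.TensorProduct.tmul_mul_tmul, one_mul]
    rw [this, hL, h, zero_mul, hQy, mul_zero, add_zero]

lemma Q_mul_right (hL : ∀ (i : ℕ) (a b : FreeGC p k), Q i (a * b) = Q i a * b + σ a * Q i b)
    (hQy : ∀ (i : ℕ) (j : Fin k), Q i (yGen p k j) = 0)
    (i : ℕ) (a : FreeGC p k) (P : MvPolynomial (Fin k) (ZMod p)) :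
    Q i (a * (1 ⊗ₜ P)) = Q i a * (1 ⊗ₜ P) := by
  rw [hL, Q_right p k σ Q hL hQy, mul_zero, add_zero]

lemma Q_xP (hL : ∀ (i : ℕ) (a b : FreeGC p k), Q i (a * b) = Q i a * b + σ a * Q i b)
    (hσx : ∀ i, σ (xGen p k i) = - xGen p k i)
    (hQx : ∀ (i : ℕ) (j : Fin k), Q i (xGen p k j) = yGen p k j ^ p ^ i)
    (i : ℕ) (l : List (Fin k)) :
    Q i (xP p k l) = ∑ t : Fin l.length, ((-1 : ZMod p) ^ (t : ℕ)) •
      (xP p k (l.eraseIdx t) * (1 ⊗ₜ (MvPolynomial.X (l.get t) ^ p ^ i))) := by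
  induction l with
  | nil =>
    show Q i 1 = _
    rw [Q_one p k σ Q hL]
    simp
  | cons a l ih =>
    have hxa : xP p k (a :: l) = xGen p k a * xP p k l := by simp [xP]
    rw [hxa, hL, hσx, hQx, ih, ypow]
    simp only [List.length_cons]
    rw [Fin.sum_univ_succ]
    simp only [Fin.val_zero, pow_zero, one_smul, Fin.val_succ, List.get_cons_succ,
      List.eraseIdx_cons_succ, List.eraseIdx_cons_zero, List.get_cons_zero]
    congr 1
    · exact right_comm p k _ _
    · rw [Finset.mul_sum]
      apply Finset.sum_congr rfl
      intro t _
      have hxc : xP p k (a :: l.eraseIdx t) = xGen p k a * xP p k (l.eraseIdx t) := by simp [xP]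
      have hget : (a :: l).get t.succ = l.get t := by
        simp [List.get_eq_getElem]
      have hsign : (-1 : ZMod p) ^ ((t : ℕ) + 1) = -(-1 : ZMod p) ^ (t : ℕ) := by ring
      set c : ZMod p := (-1) ^ (t : ℕ) with hc
      set W := xP p k (l.eraseIdx ↑t) * 1 ⊗ₜ[ZMod p] (MvPolynomial.X (l.get t) ^ p ^ i) with hW
      rw [hget, hxc, mul_assoc, hsign, mul_smul_comm c (-xGen p k a) W, neg_mul (xGen p k a) W,
        smul_neg, ← neg_smul c (xGen p k a * W)]
  
lemma bb_eq (hmk : m ≤ k) {s : ℕ} (f : Fin s → Fin k) :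
    bb p k m hmk f = xP p k (lF k m hmk f) * (1 ⊗ₜ MvPolynomial.monomial (dF p k f) 1) := by
  rw [bb, xP_eq, Algebra.TensorProduct.tmul_mul_tmul, mul_one, one_mul]

lemma Q_bb (hL : ∀ (i : ℕ) (a b : FreeGC p k), Q i (a * b) = Q i a * b + σ a * Q i b)
    (hσx : ∀ i, σ (xGen p k i) = - xGen p k i)
    (hQx : ∀ (i : ℕ) (j : Fin k), Q i (xGen p k j) = yGen p k j ^ p ^ i)
    (hQy : ∀ (i : ℕ) (j : Fin k), Q i (yGen p k j) = 0)
    (hmk : m ≤ k) {s : ℕ} (f : Fin s → Fin k) :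
    Q s (bb p k m hmk f) = ∑ t : Fin (lF k m hmk f).length, ((-1 : ZMod p) ^ (t : ℕ)) •
      bb p k m hmk (Fin.snoc f ((lF k m hmk f).get t)) := by
  rw [bb_eq, Q_mul_right p k σ Q hL hQy, Q_xP p k σ Q hL hσx hQx, Finset.sum_mul]
  apply Finset.sum_congr rfl
  intro t _
  rw [smul_mul_assoc, mul_assoc, Algebra.TensorProduct.tmul_mul_tmul, one_mul,
    MvPolynomial.X_pow_eq_monomial, MvPolynomial.monomial_mul, one_mul,
    lF_eraseIdx k m hmk f t, bb_eq p k m hmk, dF_snoc, add_comm (dF p k f)]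

lemma snoc_inj {s : ℕ} (f : Fin s → Fin k) (hf : Function.Injective f) (j : Fin k)
    (hj : ∀ i, f i ≠ j) : Function.Injective (Fin.snoc f j) := by
  intro a b hab
  rcases Fin.eq_castSucc_or_eq_last a with ⟨a', rfl⟩ | rfl <;>
    rcases Fin.eq_castSucc_or_eq_last b with ⟨b', rfl⟩ | rfl
  · rw [Fin.snoc_castSucc, Fin.snoc_castSucc] at hab
    rw [hf hab]
  · rw [Fin.snoc_castSucc, Fin.snoc_last] at hab
    exact absurd hab (hj a')
  · rw [Fin.snoc_last, Fin.snoc_castSucc] at hab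
    exact absurd hab.symm (hj b')
  · rfl

lemma snoc_eq_iff {s : ℕ} (hsk : s + 1 ≤ k) (f : Fin s → Fin k) (j : Fin k) :
    Fin.snoc f j = Fin.castLE hsk ↔
      (f = Fin.castLE (Nat.le_of_succ_le hsk) ∧ j = ⟨s, hsk⟩) := by
  constructor
  · intro h
    refine ⟨funext fun i => ?_, ?_⟩
    · have h1 := congrFun h i.castSucc
      rw [Fin.snoc_castSucc] at h1
      rw [h1]
      exact Fin.ext (by simp)
    · have h2 := congrFun h (Fin.last s)
      rw [Fin.snoc_last] at h2
      rw [h2]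
      exact Fin.ext (by simp)
  · rintro ⟨h1, h2⟩
    funext i
    refine Fin.lastCases ?_ (fun i' => ?_) i
    · rw [Fin.snoc_last, h2]
      exact Fin.ext (by simp)
    · rw [Fin.snoc_castSucc, h1]
      exact Fin.ext (by simp)

lemma LL_Q_bb_zero (hL : ∀ (i : ℕ) (a b : FreeGC p k), Q i (a * b) = Q i a * b + σ a * Q i b)
    (hσx : ∀ i, σ (xGen p k i) = - xGen p k i)
    (hQx : ∀ (i : ℕ) (j : Fin k), Q i (xGen p k j) = yGen p k j ^ p ^ i)
    (hQy : ∀ (i : ℕ) (j : Fin k), Q i (yGen p k j) = 0)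
    (hmk : m ≤ k) {s : ℕ} (hsk : s + 1 ≤ k)
    (φ : Module.Dual (ZMod p) (ExteriorAlgebra (ZMod p) (Fin k → ZMod p)))
    (hφ : φ (eP p k (lF k m hmk (Fin.castLE hsk))) = 1)
    (f : Fin s → Fin k) (hf : Function.Injective f)
    (hne : f ≠ Fin.castLE (Nat.le_of_succ_le hsk)) :
    LL p k φ (dF p k (Fin.castLE hsk)) (Q s (bb p k m hmk f)) = 0 := by
  rw [Q_bb p k m σ Q hL hσx hQx hQy hmk f, map_sum]
  apply Finset.sum_eq_zero
  intro t _
  have hmem : (lF k m hmk f).get t ∈ lF k m hmk f := List.get_mem _ _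
  have hj := ((mem_lF k m hmk f _).mp hmem).2
  rw [map_smul, LL_bb p k m hmk hsk φ hφ _ (snoc_inj k f hf _ hj), if_neg, smul_zero]
  rw [snoc_eq_iff]
  rintro ⟨h1, -⟩
  exact hne h1

lemma LL_Q_bb_f0 (hL : ∀ (i : ℕ) (a b : FreeGC p k), Q i (a * b) = Q i a * b + σ a * Q i b)
    (hσx : ∀ i, σ (xGen p k i) = - xGen p k i)
    (hQx : ∀ (i : ℕ) (j : Fin k), Q i (xGen p k j) = yGen p k j ^ p ^ i)
    (hQy : ∀ (i : ℕ) (j : Fin k), Q i (yGen p k j) = 0)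
    (hmk : m ≤ k) {s : ℕ} (hsk : s + 1 ≤ k) (hsm : s < m)
    (φ : Module.Dual (ZMod p) (ExteriorAlgebra (ZMod p) (Fin k → ZMod p)))
    (hφ : φ (eP p k (lF k m hmk (Fin.castLE hsk))) = 1) :
    LL p k φ (dF p k (Fin.castLE hsk))
      (Q s (bb p k m hmk (Fin.castLE (Nat.le_of_succ_le hsk)))) ≠ 0 := by
  rw [Q_bb p k m σ Q hL hσx hQx hQy hmk _, map_sum]
  set l := lF k m hmk (Fin.castLE (Nat.le_of_succ_le hsk)) with hl
  have hjmem : (⟨s, hsk⟩ : Fin k) ∈ l := by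
    rw [hl, mem_lF]
    exact ⟨hsm, fun i => by simp [Fin.ext_iff]; omega⟩
  obtain ⟨t0, ht0⟩ := List.mem_iff_get.mp hjmem
  have hterm : ∀ t : Fin l.length,
      LL p k φ (dF p k (Fin.castLE hsk))
        ((-1 : ZMod p) ^ (t : ℕ) • bb p k m hmk (Fin.snoc (Fin.castLE (Nat.le_of_succ_le hsk)) (l.get t))) =
      if t = t0 then (-1 : ZMod p) ^ (t : ℕ) else 0 := by
    intro t
    have hmem : l.get t ∈ lF k m hmk (Fin.castLE (Nat.le_of_succ_le hsk)) := List.get_mem _ _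
    have hj := ((mem_lF k m hmk _ _).mp hmem).2
    rw [map_smul, LL_bb p k m hmk hsk φ hφ _
      (snoc_inj k _ (Fin.castLE_injective _) _ hj)]
    by_cases ht : t = t0
    · rw [if_pos ht, if_pos, smul_eq_mul, mul_one]
      rw [snoc_eq_iff]
      exact ⟨rfl, ht ▸ ht0⟩
    · rw [if_neg ht, if_neg, smul_zero]
      rw [snoc_eq_iff]
      rintro ⟨-, h2⟩
      exact ht ((List.Nodup.get_inj_iff (lF_nodup k m hmk _)).mp (h2.trans ht0.symm))
  rw [Finset.sum_congr rfl (fun t _ => hterm t), Finset.sum_ite_eq' Finset.univ t0]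
  simp only [Finset.mem_univ, if_true]
  exact pow_ne_zero _ (neg_ne_zero.2 one_ne_zero)

lemma step (hL : ∀ (i : ℕ) (a b : FreeGC p k), Q i (a * b) = Q i a * b + σ a * Q i b)
    (hσx : ∀ i, σ (xGen p k i) = - xGen p k i)
    (hQx : ∀ (i : ℕ) (j : Fin k), Q i (xGen p k j) = yGen p k j ^ p ^ i)
    (hQy : ∀ (i : ℕ) (j : Fin k), Q i (yGen p k j) = 0)
    (hmk : m ≤ k) {s : ℕ} (hsk : s + 1 ≤ k) (hsm : s < m)
    (z : FreeGC p k)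
    (hz : z ∈ Submodule.span (ZMod p) (Set.range
      (fun f : {f : Fin s → Fin k // Function.Injective f} => bb p k m hmk f.1)))
    (hz0 : ∀ φ : Module.Dual (ZMod p) (ExteriorAlgebra (ZMod p) (Fin k → ZMod p)),
      φ (eP p k (lF k m hmk (Fin.castLE (Nat.le_of_succ_le hsk)))) = 1 →
      LL p k φ (dF p k (Fin.castLE (Nat.le_of_succ_le hsk))) z ≠ 0) :
    (Q s z ∈ Submodule.span (ZMod p) (Set.range
      (fun f : {f : Fin (s+1) → Fin k // Function.Injective f} => bb p k m hmk f.1))) ∧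
    ∀ φ : Module.Dual (ZMod p) (ExteriorAlgebra (ZMod p) (Fin k → ZMod p)),
      φ (eP p k (lF k m hmk (Fin.castLE hsk))) = 1 →
      LL p k φ (dF p k (Fin.castLE hsk)) (Q s z) ≠ 0 := by
  have hs : s ≤ k := Nat.le_of_succ_le hsk
  obtain ⟨c, hc⟩ := Finsupp.mem_span_range_iff_exists_finsupp.mp hz
  have hQz : Q s z = c.sum fun f a => a • Q s (bb p k m hmk f.1) := by
    rw [← hc, map_finsuppSum]
    exact Finsupp.sum_congr (fun f _ => (Q s).map_smul _ _)
  set f0 : {f : Fin s → Fin k // Function.Injective f} :=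
    ⟨Fin.castLE hs, Fin.castLE_injective _⟩ with hf0
  constructor
  · rw [hQz]
    apply Submodule.finsuppSum_mem
    intro f _
    apply Submodule.smul_mem
    rw [Q_bb p k m σ Q hL hσx hQx hQy hmk f.1]
    apply Submodule.sum_mem
    intro t _
    apply Submodule.smul_mem
    apply Submodule.subset_span
    exact ⟨⟨Fin.snoc f.1 _,
      snoc_inj k f.1 f.2 _ ((mem_lF k m hmk f.1 _).mp (List.get_mem _ _)).2⟩, rfl⟩
  · intro φ hφ
    obtain ⟨φ₀, hφ₀⟩ := exists_phi p k _ (lF_nodup k m hmk (Fin.castLE hs))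
    have hterm0 : ∀ (f : {f : Fin s → Fin k // Function.Injective f}) (a : ZMod p),
        LL p k φ₀ (dF p k (Fin.castLE hs)) (a • bb p k m hmk f.1) =
          if f = f0 then a else 0 := by
      intro f a
      rw [map_smul, LL_bb p k m hmk hs φ₀ hφ₀ f.1 f.2]
      by_cases hff : f = f0
      · rw [if_pos (show f.1 = Fin.castLE hs from by rw [hff]), if_pos hff, smul_eq_mul, mul_one]
      · rw [if_neg (fun h => hff (Subtype.ext h)), if_neg hff, smul_zero]
    have hLz : LL p k φ₀ (dF p k (Fin.castLE hs)) z =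
        if f0 ∈ c.support then c f0 else 0 := by
      rw [← hc, map_finsuppSum,
        Finsupp.sum_congr (g2 := fun f a => if f = f0 then a else 0) (fun f _ => hterm0 f (c f)),
        Finsupp.sum_ite_eq' c f0 (fun _ a => a)]
    have hcf0 : c f0 ≠ 0 := by
      intro h
      apply hz0 φ₀ hφ₀
      rw [hLz]
      split_ifs with hmem
      · exact h
      · rfl
    have hD := LL_Q_bb_f0 p k m σ Q hL hσx hQx hQy hmk hsk hsm φ hφ
    have htermQ : ∀ (f : {f : Fin s → Fin k // Function.Injective f}) (a : ZMod p),
        LL p k φ (dF p k (Fin.castLE hsk)) (a • Q s (bb p k m hmk f.1)) =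
          if f = f0 then a * LL p k φ (dF p k (Fin.castLE hsk))
            (Q s (bb p k m hmk (Fin.castLE hs))) else 0 := by
      intro f a
      rw [map_smul]
      by_cases hff : f = f0
      · rw [if_pos hff, hff, smul_eq_mul]
      · rw [if_neg hff,
          LL_Q_bb_zero p k m σ Q hL hσx hQx hQy hmk hsk φ hφ f.1 f.2
            (fun h => hff (Subtype.ext h)), smul_zero]
    have hLQ : LL p k φ (dF p k (Fin.castLE hsk)) (Q s z) =
        if f0 ∈ c.support then c f0 * LL p k φ (dF p k (Fin.castLE hsk))
          (Q s (bb p k m hmk (Fin.castLE hs))) else 0 := by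
      rw [hQz, map_finsuppSum,
        Finsupp.sum_congr (g2 := fun f a => if f = f0 then a * LL p k φ (dF p k (Fin.castLE hsk))
          (Q s (bb p k m hmk (Fin.castLE hs))) else 0) (fun f _ => htermQ f (c f)),
        Finsupp.sum_ite_eq' c f0 _]
    rw [hLQ, if_pos (Finsupp.mem_support_iff.2 hcf0)]
    exact mul_ne_zero hcf0 hD


lemma bb_zero (hmk : m ≤ k) :
    bb p k m hmk (Fin.castLE (Nat.zero_le k)) = xP p k (lInit k m hmk) := by
  rw [bb, xP_eq]
  have h1 : lF k m hmk (Fin.castLE (Nat.zero_le k)) = lInit k m hmk := by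
    rw [lF]
    apply List.filter_eq_self.mpr
    intro a _
    simp
  have h2 : dF p k (Fin.castLE (Nat.zero_le k) : Fin 0 → Fin k) = 0 := by
    simp [dF]
  rw [h1, h2, show (MvPolynomial.monomial (0 : Fin k →₀ ℕ) (1 : ZMod p)) = 1 by simp]

end QLayer
end Stmt10

theorem stmt_10 (p : ℕ) [Fact p.Prime] (hodd : Odd p) (k n m : ℕ)
    (hkn : n + 1 ≤ k) (hnm : n + 1 ≤ m) (hmk : m ≤ k)
    (σ : FreeGC p k →+* FreeGC p k)
    (hσx : ∀ i, σ (xGen p k i) = - xGen p k i)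
    (hσy : ∀ i, σ (yGen p k i) = yGen p k i)
    (Q : ℕ → FreeGC p k →ₗ[ZMod p] FreeGC p k)
    (hL : ∀ (i : ℕ) (a b : FreeGC p k), Q i (a * b) = Q i a * b + σ a * Q i b)
    (hQx : ∀ (i : ℕ) (j : Fin k), Q i (xGen p k j) = yGen p k j ^ p ^ i)
    (hQy : ∀ (i : ℕ) (j : Fin k), Q i (yGen p k j) = 0) :
    compQ (fun i r => Q i r) n
      ((List.ofFn fun s : Fin m => xGen p k (Fin.castLE hmk s)).prod) ≠ 0 := by
  have hprod : (List.ofFn fun s : Fin m => xGen p k (Fin.castLE hmk s)).prod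
      = Stmt10.xP p k (Stmt10.lInit k m hmk) := by
    rw [Stmt10.xP, Stmt10.lInit, List.map_ofFn]
    rfl
  have main : ∀ r : ℕ, ∀ _hrn : r ≤ n,
      ((compQ (fun i r => Q i r) r
          ((List.ofFn fun s : Fin m => xGen p k (Fin.castLE hmk s)).prod) ∈
        Submodule.span (ZMod p) (Set.range
          (fun f : {f : Fin (r+1) → Fin k // Function.Injective f} => Stmt10.bb p k m hmk f.1))) ∧
      ∀ φ : Module.Dual (ZMod p) (ExteriorAlgebra (ZMod p) (Fin k → ZMod p)),
        φ (Stmt10.eP p k (Stmt10.lF k m hmk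
            (Fin.castLE (show r+1 ≤ k from le_trans (by omega) hkn)))) = 1 →
        Stmt10.LL p k φ (Stmt10.dF p k (Fin.castLE (show r+1 ≤ k from le_trans (by omega) hkn)))
          (compQ (fun i r => Q i r) r
            ((List.ofFn fun s : Fin m => xGen p k (Fin.castLE hmk s)).prod)) ≠ 0) := by
    intro r
    induction r with
    | zero =>
      intro hr
      have h := Stmt10.step p k m σ Q hL hσx hQx hQy hmk
        (show 0+1 ≤ k from le_trans (by omega) hkn) (show 0 < m by omega)
        (Stmt10.bb p k m hmk (Fin.castLE (Nat.zero_le k)))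
        (Submodule.subset_span ⟨⟨Fin.castLE (Nat.zero_le k), Fin.castLE_injective _⟩, rfl⟩)
        (fun φ hφ => by
          rw [Stmt10.LL_bb p k m hmk _ φ hφ _ (Fin.castLE_injective _), if_pos rfl]
          exact one_ne_zero)
      have hz' : compQ (fun i r => Q i r) 0
          ((List.ofFn fun s : Fin m => xGen p k (Fin.castLE hmk s)).prod)
          = Q 0 (Stmt10.bb p k m hmk (Fin.castLE (Nat.zero_le k))) := by
        show Q 0 _ = _
        rw [hprod, ← Stmt10.bb_zero p k m hmk]
      refine ⟨?_, ?_⟩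
      · rw [hz']
        exact h.1
      · intro φ hφ
        rw [hz']
        exact h.2 φ hφ
    | succ r ih =>
      intro hr
      have ihr := ih (by omega)
      have h := Stmt10.step p k m σ Q hL hσx hQx hQy hmk
        (show (r+1)+1 ≤ k from le_trans (by omega) hkn) (show r+1 < m by omega)
        _ ihr.1 ihr.2
      exact ⟨h.1, h.2⟩
  obtain ⟨-, h2⟩ := main n le_rfl
  obtain ⟨φ, hφ⟩ := Stmt10.exists_phi p k _
    (Stmt10.lF_nodup k m hmk (Fin.castLE (show n+1 ≤ k from hkn)))
  intro h0
  exact h2 φ hφ (by rw [h0, map_zero])
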